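/- Let G be a finite abelian group, A = {a_1,...,a_k} a k-subset of G, and b_1,...,b_k elements of G. Suppose that either A or B = {b_1,...,b_k} is contained in a subgroup H of G such that the smallest prime divisor of |H| is greater than k and every other prime divisor of |H| is greater than k!. Then there exists a permutation π ∈ S_k such that a_1·b_{π(1)}, ..., a_k·b_{π(k)} are pairwise distinct. -/

import Mathlib

open Polynomial in
lemma fsx_ppow_dvd {p : ℕ} (hp : p.Prime) (a : ℕ) {ι : Type} [Fintype ι] (f : ι → ℂ)
    (hf : ∀ i, f i ^ p ^ a = 1) (hsum : ∑ i, f i = 0) : p ∣ Fintype.card ι := by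
  classical
  cases a with
  | zero =>
    simp only [pow_zero, pow_one] at hf
    have h0 : (Fintype.card ι : ℂ) = 0 := by
      rw [← hsum, Finset.sum_congr rfl (fun i _ => hf i), Finset.sum_const, Finset.card_univ,
        nsmul_eq_mul, mul_one]
    have : Fintype.card ι = 0 := by exact_mod_cast h0
    simp [this]
  | succ a =>
    haveI : Fact p.Prime := ⟨hp⟩
    have hne : (p ^ (a + 1) : ℕ) ≠ 0 := pow_ne_zero _ hp.pos.ne'
    haveI : NeZero (p ^ (a + 1)) := ⟨hne⟩
    have hpos : 0 < p ^ (a + 1) := Nat.pos_of_ne_zero hne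
    set n := p ^ (a + 1) with hn
    have hζ : IsPrimitiveRoot (Complex.exp (2 * Real.pi * Complex.I / n)) n :=
      Complex.isPrimitiveRoot_exp n hne
    set ζ := Complex.exp (2 * Real.pi * Complex.I / n) with hzeta
    have he : ∀ i, ∃ e < n, ζ ^ e = f i := fun i => hζ.eq_pow_of_pow_eq_one (hf i)
    choose e he1 he2 using he
    set m : ℕ → ℕ := fun t => (Finset.univ.filter (fun i => e i = t)).card with hm
    set P : ℤ[X] := ∑ t ∈ Finset.range n, C (m t : ℤ) * X ^ t with hP
    have haev : aeval ζ P = 0 := by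
      rw [hP, map_sum]
      have hterm : ∀ t ∈ Finset.range n, aeval ζ (C (m t : ℤ) * X ^ t)
          = ∑ i ∈ Finset.univ.filter (fun i => e i = t), f i := by
        intro t _
        have : ∀ i ∈ Finset.univ.filter (fun i => e i = t), f i = ζ ^ t := by
          intro i hi
          rw [← he2 i, (Finset.mem_filter.mp hi).2]
        rw [Finset.sum_congr rfl this, Finset.sum_const, nsmul_eq_mul]
        rw [map_mul, aeval_C, map_pow, aeval_X]
        simp [hm]
      rw [Finset.sum_congr rfl hterm,
        Finset.sum_fiberwise_of_maps_to (fun i _ => Finset.mem_range.mpr (he1 i)) f, hsum]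
    have hdvd : cyclotomic n ℤ ∣ P := by
      rw [cyclotomic_eq_minpoly hζ hpos]
      exact minpoly.isIntegrallyClosed_dvd (hζ.isIntegral hpos) haev
    obtain ⟨Q, hQ⟩ := hdvd
    have h1 : P.eval 1 = (Fintype.card ι : ℤ) := by
      rw [hP, eval_finset_sum]
      have : ∀ t ∈ Finset.range n, (C (m t : ℤ) * X ^ t).eval 1 = (m t : ℤ) := by
        intro t _; simp
      rw [Finset.sum_congr rfl this]
      have hcard : Fintype.card ι = ∑ t ∈ Finset.range n, m t := by
        rw [← Finset.card_univ]
        exact Finset.card_eq_sum_card_fiberwise (fun i _ => Finset.mem_range.mpr (he1 i))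
      rw [hcard]
      push_cast
      rfl
    have h2 : (p : ℤ) ∣ (Fintype.card ι : ℤ) := by
      rw [← h1, hQ, eval_mul, hn, eval_one_cyclotomic_prime_pow]
      exact Dvd.intro _ rfl
    exact_mod_cast h2


set_option maxHeartbeats 2000000 in
open Polynomial IntermediateField in
lemma fsx_L0 {N K : ℕ} (hN : 1 < N)
    (hother : ∀ q : ℕ, q.Prime → q ∣ N → q ≠ N.minFac → K < q) :
    ∀ N' : ℕ, N' ∣ N → ∀ {ι : Type} [Fintype ι] (f : ι → ℂ),
      Fintype.card ι ≤ K → (∀ i, f i ^ N' = 1) → ∑ i, f i = 0 →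
      N.minFac ∣ Fintype.card ι := by
  have hp : N.minFac.Prime := Nat.minFac_prime hN.ne'
  intro N'
  induction N' using Nat.strong_induction_on with
  | _ N' ih =>
  intro hdvd ι inst f hcard hf hsum
  classical
  have hN'0 : N' ≠ 0 := by
    rintro rfl
    rw [Nat.eq_zero_of_zero_dvd hdvd] at hN
    omega
  by_cases hex : ∃ q : ℕ, q.Prime ∧ q ∣ N' ∧ q ≠ N.minFac
  case neg =>
    push_neg at hex
    have hpow : N' = N.minFac ^ N'.primeFactorsList.length :=
      Nat.eq_prime_pow_of_unique_prime_dvd hN'0 (fun {d} hd hdd => hex d hd hdd)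
    exact fsx_ppow_dvd hp _ f (fun i => by rw [← hpow]; exact hf i) hsum
  case pos =>
  obtain ⟨q, hqp, hqdvd, hqne⟩ := hex
  haveI : Fact q.Prime := ⟨hqp⟩
  have hKq : K < q := hother q hqp (hqdvd.trans hdvd) hqne
  set c := N'.factorization q with hcdef
  have hc1 : 0 < c := hqp.factorization_pos_of_dvd hN'0 hqdvd
  set M := N' / q ^ c with hMdef
  have hMq : q ^ c * M = N' := Nat.ordProj_mul_ordCompl_eq_self N' q
  have hqM : ¬ q ∣ M := Nat.not_dvd_ordCompl hqp hN'0
  have hM0 : M ≠ 0 := by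
    rintro h; rw [h, mul_zero] at hMq; exact hN'0 hMq.symm
  have hq2 : 2 ≤ q := hqp.two_le
  have hqc0 : q ^ c ≠ 0 := pow_ne_zero _ (by omega)
  have hqc2 : 2 ≤ q ^ c := by
    calc 2 ≤ q := hq2
    _ = q ^ 1 := (pow_one q).symm
    _ ≤ q ^ c := Nat.pow_le_pow_right (by omega) hc1
  have hMlt : M < N' := by
    rw [← hMq]
    have := Nat.pos_of_ne_zero hM0
    calc M = 1 * M := (one_mul M).symm
    _ < q ^ c * M := by
      exact (Nat.mul_lt_mul_right this).mpr (by omega)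
  have hMdvdN' : M ∣ N' := ⟨q ^ c, by rw [mul_comm]; exact hMq.symm⟩
  have hcop : Nat.Coprime (q ^ c) M :=
    Nat.Coprime.pow_left _ ((hqp.coprime_iff_not_dvd).mpr hqM)
  -- CRT exponents
  set n₁ := M ^ (q ^ c).totient with hn₁def
  set n₂ := (q ^ c) ^ M.totient with hn₂def
  have htot1 : 0 < (q ^ c).totient := Nat.totient_pos.mpr (by omega)
  have htot2 : 0 < M.totient := Nat.totient_pos.mpr (Nat.pos_of_ne_zero hM0)
  have hMdvdn₁ : M ∣ n₁ := dvd_pow_self M (by omega)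
  have hqdvdn₂ : q ^ c ∣ n₂ := dvd_pow_self _ (by omega)
  have hmod1 : n₁ ≡ 1 [MOD q ^ c] := Nat.ModEq.pow_totient hcop.symm
  have hmod2 : n₂ ≡ 1 [MOD M] := Nat.ModEq.pow_totient hcop
  have hsum12 : n₁ + n₂ ≡ 1 [MOD N'] := by
    rw [← hMq]
    have h1 : n₁ + n₂ ≡ 1 + 0 [MOD q ^ c] :=
      hmod1.add ((Nat.modEq_zero_iff_dvd).mpr hqdvdn₂)
    have h2 : n₁ + n₂ ≡ 0 + 1 [MOD M] :=
      ((Nat.modEq_zero_iff_dvd).mpr hMdvdn₁).add hmod2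
    rw [add_zero] at h1
    rw [zero_add] at h2
    exact (Nat.modEq_and_modEq_iff_modEq_mul hcop).mp ⟨h1, h2⟩
  have hn₁pos : 0 < n₁ := Nat.pow_pos (Nat.pos_of_ne_zero hM0)
  obtain ⟨t₀, ht₀⟩ : ∃ t₀, n₁ + n₂ = 1 + N' * t₀ := by
    have := (Nat.modEq_iff_dvd' (by omega : 1 ≤ n₁ + n₂)).mp hsum12.symm
    obtain ⟨t₀, ht⟩ := this
    exact ⟨t₀, by omega⟩
  -- the splitting
  have hfne : ∀ i, f i ≠ 0 := by
    intro i h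
    have := hf i
    rw [h, zero_pow hN'0] at this
    exact zero_ne_one this
  set y : ι → ℂ := fun i => f i ^ n₂ with hydef
  set z : ι → ℂ := fun i => f i ^ n₁ with hzdef
  have hyz : ∀ i, y i * z i = f i := by
    intro i
    rw [hydef, hzdef]
    simp only
    rw [← pow_add, add_comm n₂ n₁, ht₀, pow_add, pow_one, pow_mul, hf i, one_pow, mul_one]
  have hy : ∀ i, y i ^ M = 1 := by
    intro i
    obtain ⟨d, hd⟩ : N' ∣ n₂ * M := by
      rw [← hMq]; exact mul_dvd_mul_right hqdvdn₂ M
    rw [hydef]; simp only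
    rw [← pow_mul, hd, pow_mul, hf i, one_pow]
  have hz2 : ∀ i, z i ^ q ^ c = 1 := by
    intro i
    obtain ⟨d, hd⟩ : N' ∣ n₁ * q ^ c := by
      rw [← hMq, mul_comm (q ^ c) M]
      exact mul_dvd_mul_right hMdvdn₁ _
    rw [hzdef]; simp only
    rw [← pow_mul, hd, pow_mul, hf i, one_pow]
  -- roots of unity
  haveI : NeZero N' := ⟨hN'0⟩
  haveI : NeZero (q ^ c) := ⟨hqc0⟩
  haveI : NeZero M := ⟨hM0⟩
  have hN'pos : 0 < N' := Nat.pos_of_ne_zero hN'0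
  set ζ : ℂ := Complex.exp (2 * Real.pi * Complex.I / N') with hzetadef
  have hζ : IsPrimitiveRoot ζ N' := Complex.isPrimitiveRoot_exp N' hN'0
  set ξ : ℂ := ζ ^ M with hxidef
  set μ : ℂ := ζ ^ q ^ c with hmudef
  have hξ : IsPrimitiveRoot ξ (q ^ c) := hζ.pow hN'pos (by rw [mul_comm] at hMq; exact hMq.symm)
  have hμ : IsPrimitiveRoot μ M := hζ.pow hN'pos hMq.symm
  have he : ∀ i, ∃ e < q ^ c, ξ ^ e = z i := fun i => hξ.eq_pow_of_pow_eq_one (hz2 i)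
  choose e he1 he2 using he
  -- the intermediate field L1 = Q(mu)
  set L1 : IntermediateField ℚ ℂ := ℚ⟮μ⟯ with hL1def
  have hymem : ∀ i, y i ∈ L1 := by
    intro i
    obtain ⟨s, _, hs⟩ := hμ.eq_pow_of_pow_eq_one (hy i)
    rw [← hs]
    exact pow_mem (IntermediateField.mem_adjoin_simple_self ℚ μ) s
  set cf : ℕ → L1 := fun s =>
    ⟨∑ i ∈ Finset.univ.filter (fun i => e i = s), y i,
      sum_mem (fun i _ => hymem i)⟩ with hcfdef
  set P : Polynomial L1 := ∑ s ∈ Finset.range (q ^ c), C (cf s) * X ^ s with hPdef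
  have haev : aeval ξ P = 0 := by
    rw [hPdef, map_sum]
    have hterm : ∀ s ∈ Finset.range (q ^ c), aeval ξ (C (cf s) * X ^ s)
        = ∑ i ∈ Finset.univ.filter (fun i => e i = s), f i := by
      intro s _
      rw [map_mul, aeval_C, map_pow, aeval_X]
      have hcoe : (algebraMap L1 ℂ) (cf s) = ∑ i ∈ Finset.univ.filter (fun i => e i = s), y i :=
        rfl
      rw [hcoe, Finset.sum_mul]
      refine Finset.sum_congr rfl (fun i hi => ?_)
      rw [← hyz i, ← he2 i, (Finset.mem_filter.mp hi).2]
    rw [Finset.sum_congr rfl hterm,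
      Finset.sum_fiberwise_of_maps_to (fun i _ => Finset.mem_range.mpr (he1 i)) f, hsum]
  -- minimal polynomial of xi over L1 is the cyclotomic polynomial
  have hξpow : ξ ^ q ^ c = 1 := hξ.pow_eq_one
  have hintξ : IsIntegral L1 ξ := by
    refine ⟨X ^ q ^ c - C 1, monic_X_pow_sub_C 1 hqc0, ?_⟩
    simp [hξpow]
  have hintζ : IsIntegral ℚ ζ := by
    refine ⟨X ^ N' - C 1, monic_X_pow_sub_C 1 hN'0, ?_⟩
    simp [hζ.pow_eq_one]
  have hintμ : IsIntegral ℚ μ := by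
    refine ⟨X ^ M - C 1, monic_X_pow_sub_C 1 hM0, ?_⟩
    simp [hμ.pow_eq_one]
  have hminq : minpoly L1 ξ ∣ cyclotomic (q ^ c) L1 := by
    apply minpoly.dvd
    rw [← map_cyclotomic (q ^ c) (algebraMap ℚ L1), aeval_map_algebraMap, aeval_def, ← eval_map,
      map_cyclotomic]
    exact hξ.isRoot_cyclotomic (by omega)
  -- tower of fields computation
  have hfrζ : Module.finrank ℚ ℚ⟮ζ⟯ = N'.totient := by
    rw [IntermediateField.adjoin.finrank hintζ, ← cyclotomic_eq_minpoly_rat hζ hN'pos,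
      natDegree_cyclotomic]
  have hfrμ : Module.finrank ℚ L1 = M.totient := by
    rw [hL1def, IntermediateField.adjoin.finrank hintμ,
      ← cyclotomic_eq_minpoly_rat hμ (Nat.pos_of_ne_zero hM0), natDegree_cyclotomic]
  have heqf : IntermediateField.restrictScalars ℚ (L1⟮ξ⟯) = ℚ⟮ζ⟯ := by
    rw [hL1def]; erw [IntermediateField.adjoin_adjoin_left]
    apply le_antisymm
    · rw [IntermediateField.adjoin_le_iff]
      rintro x (h | h) <;> rw [Set.mem_singleton_iff] at h <;> subst h
      · exact pow_mem (IntermediateField.mem_adjoin_simple_self ℚ ζ) _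
      · exact pow_mem (IntermediateField.mem_adjoin_simple_self ℚ ζ) _
    · have hμm : μ ∈ IntermediateField.adjoin ℚ ({μ} ∪ {ξ} : Set ℂ) :=
        IntermediateField.subset_adjoin _ _ (Or.inl rfl)
      have hξm : ξ ∈ IntermediateField.adjoin ℚ ({μ} ∪ {ξ} : Set ℂ) :=
        IntermediateField.subset_adjoin _ _ (Or.inr rfl)
      have hζeq : ξ ^ M ^ ((q ^ c).totient - 1) * μ ^ (q ^ c) ^ (M.totient - 1) = ζ := by
        rw [hxidef, hmudef, ← pow_mul, ← pow_mul, ← pow_add]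
        have e1 : M * M ^ ((q ^ c).totient - 1) = n₁ := by
          rw [hn₁def, ← pow_succ']
          congr 1
          omega
        have e2 : q ^ c * (q ^ c) ^ (M.totient - 1) = n₂ := by
          rw [hn₂def, ← pow_succ']
          congr 1
          omega
        rw [e1, e2, ht₀, pow_add, pow_one, pow_mul, hζ.pow_eq_one, one_pow, mul_one]
      rw [IntermediateField.adjoin_simple_le_iff, ← hζeq]
      exact mul_mem (pow_mem hξm _) (pow_mem hμm _)
  have hfin1 : FiniteDimensional ℚ L1 := IntermediateField.adjoin.finiteDimensional hintμ
  have hfin2 : FiniteDimensional L1 L1⟮ξ⟯ := IntermediateField.adjoin.finiteDimensional hintξ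
  have htower : Module.finrank ℚ L1 * Module.finrank L1 L1⟮ξ⟯ = N'.totient := by
    rw [Module.finrank_mul_finrank ℚ L1 L1⟮ξ⟯, ← hfrζ, ← heqf]
    rfl
  have hdeg : (minpoly L1 ξ).natDegree = (q ^ c).totient := by
    have h1 : Module.finrank L1 L1⟮ξ⟯ = (minpoly L1 ξ).natDegree :=
      IntermediateField.adjoin.finrank hintξ
    have h2 : N'.totient = M.totient * (q ^ c).totient := by
      conv_lhs => rw [← hMq, mul_comm (q ^ c) M]
      rw [Nat.totient_mul hcop.symm]
    rw [hfrμ, h1, h2] at htower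
    exact Nat.eq_of_mul_eq_mul_left htot2 htower
  have hminpoly : minpoly L1 ξ = cyclotomic (q ^ c) L1 := by
    obtain ⟨R, hR⟩ := hminq
    have hmo : (minpoly L1 ξ).Monic := minpoly.monic hintξ
    have hcmo : (cyclotomic (q ^ c) L1).Monic := cyclotomic.monic _ _
    have hR0 : R ≠ 0 := by
      rintro rfl
      rw [mul_zero] at hR
      exact hcmo.ne_zero hR
    have hdeg2 : natDegree (cyclotomic (q ^ c) L1) = natDegree (minpoly L1 ξ) + natDegree R := by
      rw [hR]
      exact natDegree_mul hmo.ne_zero hR0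
    rw [natDegree_cyclotomic, hdeg] at hdeg2
    have hRdeg : natDegree R = 0 := by omega
    have hRmo : R.Monic := hmo.of_mul_monic_left (hR ▸ hcmo)
    rw [hR, hRmo.natDegree_eq_zero.mp hRdeg, mul_one]
  obtain ⟨Q, hPQ⟩ : cyclotomic (q ^ c) L1 ∣ P := hminpoly ▸ minpoly.dvd L1 ξ haev
  set s₀ := q ^ (c - 1) with hs₀def
  have hs₀pos : 0 < s₀ := Nat.pow_pos (by omega)
  have hsq : s₀ * q = q ^ c := by
    rw [hs₀def, ← pow_succ]
    congr 1
    omega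
  have hcyc : cyclotomic (q ^ c) L1 = ∑ i ∈ Finset.range q, (X ^ s₀) ^ i := by
    have hqc' : q ^ c = q ^ (c - 1 + 1) := by congr 1; omega
    rw [hqc', cyclotomic_prime_pow_eq_geom_sum hqp]
  have hcoeffP : ∀ u, u < q ^ c → P.coeff u = cf u := by
    intro u hu
    rw [hPdef, finset_sum_coeff]
    rw [Finset.sum_eq_single u (fun b _ hb => by
        rw [coeff_C_mul, coeff_X_pow, if_neg (Ne.symm hb), mul_zero])
      (fun hnotin => absurd (Finset.mem_range.mpr hu) hnotin)]
    rw [coeff_C_mul, coeff_X_pow, if_pos rfl, mul_one]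
  have hempty : ∀ ρ, ρ < s₀ → ∃ j < q, ∀ i : ι, e i ≠ ρ + j * s₀ := by
    intro ρ hρ
    by_contra hcon
    push_neg at hcon
    have hsub : (Finset.range q).image (fun j => ρ + j * s₀) ⊆ Finset.univ.image e := by
      intro u hu
      rw [Finset.mem_image] at hu
      obtain ⟨j, hj, rfl⟩ := hu
      obtain ⟨i, hi⟩ := hcon j (Finset.mem_range.mp hj)
      exact Finset.mem_image.mpr ⟨i, Finset.mem_univ i, hi⟩
    have hqle : q ≤ Fintype.card ι := by
      have h1 : ((Finset.range q).image (fun j => ρ + j * s₀)).card = q := by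
        rw [Finset.card_image_of_injective _ (fun j j' hjj => by
          have hjj' : ρ + j * s₀ = ρ + j' * s₀ := hjj
          have : j * s₀ = j' * s₀ := by omega
          exact Nat.eq_of_mul_eq_mul_right hs₀pos this), Finset.card_range]
      calc q = ((Finset.range q).image (fun j => ρ + j * s₀)).card := h1.symm
      _ ≤ (Finset.univ.image e).card := Finset.card_le_card hsub
      _ ≤ Finset.univ.card := Finset.card_image_le
      _ = Fintype.card ι := Finset.card_univ
    omega
  have hcf0 : ∀ u, u < q ^ c → cf u = 0 := by
    have hQbranch : ∀ u, u < q ^ c → P.coeff u = 0 → cf u = 0 := by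
      intro u hu h
      rw [← hcoeffP u hu, h]
    by_cases hQ0 : Q = 0
    · intro u hu
      apply hQbranch u hu
      rw [hPQ, hQ0, mul_zero, coeff_zero]
    · have hΦ0 : cyclotomic (q ^ c) L1 ≠ 0 := (cyclotomic.monic _ _).ne_zero
      have hdegΦ : (cyclotomic (q ^ c) L1).natDegree = s₀ * (q - 1) := by
        rw [natDegree_cyclotomic, Nat.totient_prime_pow hqp hc1, hs₀def]
      have hdegP : P.natDegree ≤ q ^ c - 1 := by
        rw [hPdef]
        apply natDegree_sum_le_of_forall_le
        intro u hu
        refine le_trans (natDegree_C_mul_X_pow_le _ _) ?_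
        have := Finset.mem_range.mp hu
        omega
      have hdegQ : Q.natDegree < s₀ := by
        have hmul : P.natDegree = (cyclotomic (q ^ c) L1).natDegree + Q.natDegree := by
          rw [hPQ]
          exact natDegree_mul hΦ0 hQ0
        have hss : s₀ * (q - 1) + s₀ = s₀ * q := by
          have : s₀ * (q - 1 + 1) = s₀ * (q - 1) + s₀ := Nat.mul_succ s₀ (q - 1)
          rw [← this]
          congr 1
          omega
        rw [hdegΦ] at hmul
        omega
      have hco : ∀ ρ, ρ < s₀ → ∀ j, j < q → P.coeff (ρ + j * s₀) = Q.coeff ρ := by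
        intro ρ hρ j hj
        have hmm : ∀ i : ℕ, (X ^ s₀ : Polynomial L1) ^ i * Q = Q * X ^ (s₀ * i) := by
          intro i
          rw [← pow_mul, mul_comm]
        rw [hPQ, hcyc, Finset.sum_mul]
        rw [Finset.sum_congr rfl (fun i _ => hmm i), finset_sum_coeff]
        have hj' : j ∈ Finset.range q := Finset.mem_range.mpr hj
        rw [Finset.sum_eq_single j (fun i _ hij => ?_) (fun h => absurd hj' h)]
        · rw [coeff_mul_X_pow']
          have m1 : s₀ * j = j * s₀ := mul_comm _ _
          rw [if_pos (by omega)]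
          congr 1
          omega
        · rw [coeff_mul_X_pow']
          have m1 : s₀ * j = j * s₀ := mul_comm _ _
          rcases Nat.lt_or_ge i j with hlt | hge
          · have m2 : s₀ * i + s₀ ≤ s₀ * j := by
              have h := Nat.mul_le_mul_left s₀ (show i + 1 ≤ j from by omega)
              rwa [Nat.mul_succ] at h
            rw [if_pos (by omega)]
            apply coeff_eq_zero_of_natDegree_lt
            omega
          · have m2 : s₀ * j + s₀ ≤ s₀ * i := by
              have h := Nat.mul_le_mul_left s₀ (show j + 1 ≤ i from by omega)
              rwa [Nat.mul_succ] at h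
            rw [if_neg (by omega)]
      intro u hu
      have hρ : u % s₀ < s₀ := Nat.mod_lt _ hs₀pos
      have hj : u / s₀ < q := by
        apply (Nat.div_lt_iff_lt_mul hs₀pos).mpr
        rw [mul_comm q s₀, hsq]
        exact hu
      have hu' : u = u % s₀ + u / s₀ * s₀ := by
        have h := Nat.mod_add_div u s₀
        have : s₀ * (u / s₀) = u / s₀ * s₀ := mul_comm _ _
        omega
      obtain ⟨j₀, hj₀q, hj₀⟩ := hempty (u % s₀) hρ
      have hlt₀ : u % s₀ + j₀ * s₀ < q ^ c := by
        have h2 : j₀ * s₀ + s₀ ≤ q * s₀ := by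
          have h := Nat.mul_le_mul_right s₀ (show j₀ + 1 ≤ q from by omega)
          rwa [Nat.succ_mul] at h
        have hqs : q * s₀ = q ^ c := by rw [mul_comm]; exact hsq
        omega
      have hcfj₀ : cf (u % s₀ + j₀ * s₀) = 0 := by
        apply Subtype.ext
        show (∑ i ∈ Finset.univ.filter (fun i => e i = u % s₀ + j₀ * s₀), y i) = _
        rw [Finset.filter_false_of_mem (fun i _ => hj₀ i), Finset.sum_empty]
        rfl
      have h3 := hco (u % s₀) hρ (u / s₀) hj
      have h4 := hco (u % s₀) hρ j₀ hj₀q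
      have h5 : P.coeff u = 0 := by
        rw [hu', h3, ← h4, hcoeffP _ hlt₀, hcfj₀]
      exact hQbranch u hu h5
  have hMdvdN : M ∣ N := hMdvdN'.trans hdvd
  have hdvdfib : ∀ u, u ∈ Finset.range (q ^ c) →
      N.minFac ∣ (Finset.univ.filter (fun i => e i = u)).card := by
    intro u hu
    have hcfu := congrArg Subtype.val (hcf0 u (Finset.mem_range.mp hu))
    letI instS : Fintype {i : ι // i ∈ Finset.univ.filter (fun i => e i = u)} :=
      FinsetCoe.fintype _
    have hzsum : (∑ i : {i : ι // i ∈ Finset.univ.filter (fun i => e i = u)}, y i.1) = 0 := by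
      rw [Finset.sum_coe_sort (Finset.univ.filter (fun i => e i = u)) (fun i => y i)]
      simpa [hcfdef] using hcfu
    have hcard' : Fintype.card {i : ι // i ∈ Finset.univ.filter (fun i => e i = u)} ≤ K := by
      rw [Fintype.card_coe]
      refine le_trans (le_trans (Finset.card_filter_le _ _) ?_) hcard
      rw [Finset.card_univ]
    have hres := ih M hMlt hMdvdN
      (fun i : {i : ι // i ∈ Finset.univ.filter (fun i => e i = u)} => y i.1)
      hcard' (fun i => hy i.1) hzsum
    rwa [Fintype.card_coe] at hres
  rw [← Finset.card_univ, Finset.card_eq_sum_card_fiberwise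
    (show ∀ i ∈ Finset.univ, e i ∈ Finset.range (q ^ c) from
      fun i _ => Finset.mem_range.mpr (he1 i))]
  exact Finset.dvd_sum hdvdfib

lemma fsx_minor {ι : Type*} : ∀ {k : ℕ} (v : Fin k → ι → ℂ), LinearIndependent ℂ v →
    ∃ g : Fin k → ι, (Matrix.of fun st i => v i (g st)).det ≠ 0 := by
  intro k
  induction k with
  | zero =>
    intro v _
    exact ⟨fun i => i.elim0, by rw [Matrix.det_fin_zero]; exact one_ne_zero⟩
  | succ k ihk =>
    intro v hv
    classical
    obtain ⟨g', hg'⟩ := ihk (fun i => v i.castSucc)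
      (hv.comp Fin.castSucc (Fin.castSucc_injective k))
    set M' : Matrix (Fin k) (Fin k) ℂ := Matrix.of fun st i => v i.castSucc (g' st) with hM'
    set w : Fin k → ℂ := fun st => v (Fin.last k) (g' st) with hw
    set c' : Fin k → ℂ := M'⁻¹.mulVec w with hc'
    have hMc' : M'.mulVec c' = w := by
      rw [hc', Matrix.mulVec_mulVec, Matrix.mul_nonsing_inv _ (isUnit_iff_ne_zero.mpr hg'),
        Matrix.one_mulVec]
    set c : Fin (k + 1) → ℂ := Fin.snoc (fun i => - c' i) 1 with hc
    have hclast : c (Fin.last k) = 1 := by rw [hc, Fin.snoc_last]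
    have hccast : ∀ i : Fin k, c i.castSucc = - c' i := fun i => by rw [hc, Fin.snoc_castSucc]
    have hcsol : ∀ st : Fin k, ∑ i, c i * v i (g' st) = 0 := by
      intro st
      rw [Fin.sum_univ_castSucc]
      have h1 : ∀ i : Fin k, c i.castSucc * v i.castSucc (g' st) = - (c' i * M' st i) := by
        intro i
        rw [hccast i, neg_mul]
        rfl
      rw [Finset.sum_congr rfl (fun i _ => h1 i), Finset.sum_neg_distrib]
      have h2 : ∑ i, c' i * M' st i = w st := by
        rw [← hMc']
        rw [Matrix.mulVec, dotProduct]
        exact Finset.sum_congr rfl (fun i _ => mul_comm _ _)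
      rw [h2, hclast, one_mul]
      ring
    have hWne : ∃ x : ι, ∑ i, c i * v i x ≠ 0 := by
      by_contra hcon
      push_neg at hcon
      have h0 : ∑ i, c i • v i = 0 := by
        funext x
        simpa using hcon x
      have := linearIndependent_iff'.mp hv Finset.univ c h0 (Fin.last k) (Finset.mem_univ _)
      rw [hclast] at this
      exact one_ne_zero this
    obtain ⟨χ₀, hχ₀⟩ := hWne
    refine ⟨Fin.snoc g' χ₀, fun hdet => ?_⟩
    obtain ⟨d, hd0, hd⟩ := Matrix.exists_mulVec_eq_zero_iff.mpr hdet
    have hrow : ∀ s : Fin (k + 1), ∑ i, v i ((Fin.snoc g' χ₀ : Fin (k+1) → ι) s) * d i = 0 := by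
      intro s
      have := congrFun hd s
      rw [Matrix.mulVec, dotProduct] at this
      simp only [Pi.zero_apply] at this
      rw [← this]
      exact Finset.sum_congr rfl (fun i _ => rfl)
    set u : Fin (k + 1) → ℂ := fun i => d i - d (Fin.last k) * c i with hu
    have hulast : u (Fin.last k) = 0 := by
      rw [hu]; simp [hclast]
    have husol : ∀ st : Fin k, ∑ i, u i * v i (g' st) = 0 := by
      intro st
      have h1 := hrow st.castSucc
      rw [Fin.snoc_castSucc] at h1
      have h2 := hcsol st
      have : ∑ i, u i * v i (g' st)
          = (∑ i, v i (g' st) * d i) - d (Fin.last k) * ∑ i, c i * v i (g' st) := by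
        rw [Finset.mul_sum, ← Finset.sum_sub_distrib]
        exact Finset.sum_congr rfl (fun i _ => by rw [hu]; ring)
      rw [this, h1, h2]
      ring
    have hucast : ∀ i : Fin k, u i.castSucc = 0 := by
      by_contra hcon
      push_neg at hcon
      obtain ⟨i0, hi0⟩ := hcon
      have hker : ∃ x, x ≠ 0 ∧ M'.mulVec x = 0 := by
        refine ⟨fun i => u i.castSucc, fun h => hi0 (congrFun h i0), ?_⟩
        funext st
        simp only [Pi.zero_apply]
        rw [Matrix.mulVec, dotProduct]
        have := husol st
        rw [Fin.sum_univ_castSucc, hulast, zero_mul, add_zero] at this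
        rw [← this]
        exact Finset.sum_congr rfl (fun i _ => by rw [hM']; simp [Matrix.of_apply]; ring)
      exact hg' (Matrix.exists_mulVec_eq_zero_iff.mp hker)
    have hdc : ∀ i, d i = d (Fin.last k) * c i := by
      intro i
      have : u i = 0 := by
        refine Fin.lastCases ?_ ?_ i
        · exact hulast
        · exact hucast
      rw [hu] at this
      linear_combination this
    have hlastrow := hrow (Fin.last k)
    rw [Fin.snoc_last] at hlastrow
    have : d (Fin.last k) * ∑ i, c i * v i χ₀ = 0 := by
      rw [Finset.mul_sum, ← hlastrow]
      exact Finset.sum_congr rfl (fun i _ => by rw [hdc i]; ring)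
    rcases mul_eq_zero.mp this with h | h
    · apply hd0
      funext i
      rw [hdc i, h, zero_mul]
      rfl
    · exact hχ₀ h

lemma fsx_char_sep {G : Type*} [CommGroup G] [Fintype G] {g g' : G} (h : g ≠ g') :
    ∃ χ : G →* ℂ, χ g ≠ χ g' := by
  haveI : NeZero ((Monoid.exponent G : ℂ)) :=
    ⟨Nat.cast_ne_zero.mpr (Monoid.exponent_ne_zero_of_finite)⟩
  have hne : g * g'⁻¹ ≠ 1 := by
    intro h1
    exact h (by rwa [mul_inv_eq_one] at h1)
  obtain ⟨φ, hφ⟩ := CommGroup.exists_apply_ne_one_of_hasEnoughRootsOfUnity G ℂ hne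
  refine ⟨(Units.coeHom ℂ).comp φ, fun heq => ?_⟩
  apply hφ
  have h2 : φ g = φ g' := Units.ext (by simpa using heq)
  rw [map_mul, map_inv, h2, mul_inv_cancel]

lemma fsx_cols_indep {G : Type*} [CommGroup G] [Fintype G] {k : ℕ} (a : Fin k → G)
    (ha : Function.Injective a) :
    LinearIndependent ℂ (fun i => fun χ : G →* ℂ => χ (a i)) := by
  let E : G → ((G →* ℂ) →* ℂ) := fun g =>
    { toFun := fun χ => χ g, map_one' := rfl, map_mul' := fun χ χ' => rfl }
  have hE : Function.Injective E := by
    intro g g' hgg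
    by_contra hne
    obtain ⟨χ, hχ⟩ := fsx_char_sep hne
    exact hχ (congrFun (congrArg (fun (F : (G →* ℂ) →* ℂ) => (F : (G →* ℂ) → ℂ)) hgg) χ)
  have h1 := linearIndependent_monoidHom (G →* ℂ) ℂ
  exact h1.comp (fun i => E (a i)) (fun i j hij => ha (hE hij))

lemma fsx_detper {k : ℕ} (A B : Matrix (Fin k) (Fin k) ℂ) :
    ∑ π : Equiv.Perm (Fin k), (Matrix.of fun st i => A st i * B st (π i)).det
      = A.det * ∑ π : Equiv.Perm (Fin k), ∏ i, B i (π i) := by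
  simp only [Matrix.det_apply', Matrix.of_apply]
  rw [Finset.sum_comm, Finset.sum_mul]
  refine Finset.sum_congr rfl (fun σ _ => ?_)
  have hprod : ∀ π : Equiv.Perm (Fin k),
      ∏ i, (A (σ i) i * B (σ i) (π i)) = (∏ i, A (σ i) i) * ∏ i, B (σ i) (π i) :=
    fun π => Finset.prod_mul_distrib
  have hre : ∑ π : Equiv.Perm (Fin k), ∏ i, B (σ i) (π i)
      = ∑ π : Equiv.Perm (Fin k), ∏ i, B i (π i) := by
    refine (Fintype.sum_equiv (Equiv.mulRight σ)
      (fun π => ∏ i, B i (π i)) (fun π => ∏ i, B (σ i) (π i)) (fun τ => ?_)).symm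
    show ∏ i, B i (τ i) = ∏ i, B (σ i) ((τ * σ) i)
    rw [← Equiv.prod_comp σ (fun j => B j (τ j))]
    exact Finset.prod_congr rfl (fun i _ => rfl)
  calc ∑ π : Equiv.Perm (Fin k), (Equiv.Perm.sign σ : ℂ) * ∏ i, (A (σ i) i * B (σ i) (π i))
      = ∑ π : Equiv.Perm (Fin k),
          ((Equiv.Perm.sign σ : ℂ) * ∏ i, A (σ i) i) * ∏ i, B (σ i) (π i) := by
        refine Finset.sum_congr rfl (fun π _ => ?_)
        rw [hprod π, mul_assoc]
    _ = ((Equiv.Perm.sign σ : ℂ) * ∏ i, A (σ i) i)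
          * ∑ π : Equiv.Perm (Fin k), ∏ i, B (σ i) (π i) := by
        rw [← Finset.mul_sum]
    _ = ((Equiv.Perm.sign σ : ℂ) * ∏ i, A (σ i) i)
          * ∑ π : Equiv.Perm (Fin k), ∏ i, B i (π i) := by
        rw [hre]

lemma fsx_core {G : Type*} [CommGroup G] [Fintype G] {k N : ℕ} (hN : 1 < N)
    (hmin : k < N.minFac)
    (hother : ∀ q : ℕ, q.Prime → q ∣ N → q ≠ N.minFac → Nat.factorial k < q)
    (a b : Fin k → G) (ha : Function.Injective a) (hb : ∀ j, b j ^ N = 1) :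
    ∃ π : Equiv.Perm (Fin k), Function.Injective (fun i => a i * b (π i)) := by
  classical
  obtain ⟨g, hg⟩ := fsx_minor (fun i => fun χ : G →* ℂ => χ (a i)) (fsx_cols_indep a ha)
  set A : Matrix (Fin k) (Fin k) ℂ := Matrix.of fun st i => (g st) (a i) with hA
  set B : Matrix (Fin k) (Fin k) ℂ := Matrix.of fun st j => (g st) (b j) with hB
  have hper : (∑ π : Equiv.Perm (Fin k), ∏ i, B i (π i)) ≠ 0 := by
    intro h0
    have hcardperm : Fintype.card (Equiv.Perm (Fin k)) = Nat.factorial k := by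
      rw [Fintype.card_perm, Fintype.card_fin]
    have hdvd := fsx_L0 hN (K := Nat.factorial k) hother N dvd_rfl
      (fun π : Equiv.Perm (Fin k) => ∏ i, B i (π i)) (le_of_eq hcardperm)
      (fun π => ?_) h0
    · rw [hcardperm] at hdvd
      have hple := (Nat.Prime.dvd_factorial (Nat.minFac_prime hN.ne')).mp hdvd
      omega
    · rw [← Finset.prod_pow]
      refine Finset.prod_eq_one (fun i _ => ?_)
      rw [hB]
      show ((g i) (b (π i))) ^ N = 1
      rw [← map_pow, hb, map_one]
  have hid := fsx_detper A B
  have hsumne : (∑ π : Equiv.Perm (Fin k),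
      (Matrix.of fun st i => A st i * B st (π i)).det) ≠ 0 := by
    rw [hid]
    exact mul_ne_zero hg hper
  obtain ⟨π, -, hπ⟩ := Finset.exists_ne_zero_of_sum_ne_zero hsumne
  refine ⟨π, fun i i' hii => ?_⟩
  by_contra hne'
  apply hπ
  refine Matrix.det_zero_of_column_eq hne' (fun st => ?_)
  show A st i * B st (π i) = A st i' * B st (π i')
  rw [hA, hB]
  show (g st) (a i) * (g st) (b (π i)) = (g st) (a i') * (g st) (b (π i'))
  rw [← map_mul, ← map_mul]
  exact congrArg (g st) hii

/-- Main theorem: if the distinct elements `a i` (or all the `b i`) lie in a subgroup `H`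
whose order is `k`-large (least prime divisor `> k`, every other prime divisor `> k!`),
then some permutation makes the products `a i * b (π i)` distinct. -/
theorem feng_sun_xiang_main {G : Type*} [CommGroup G] [Fintype G] {k : ℕ} (hk : 0 < k)
    (a b : Fin k → G) (ha : Function.Injective a) (H : Subgroup G)
    (hH1 : 1 < Nat.card H)
    (hmin : k < (Nat.card H).minFac)
    (hother : ∀ q : ℕ, q.Prime → q ∣ Nat.card H → q ≠ (Nat.card H).minFac →
      Nat.factorial k < q)
    (hAB : (∀ i, a i ∈ H) ∨ (∀ i, b i ∈ H)) :
    ∃ π : Equiv.Perm (Fin k), Function.Injective (fun i => a i * b (π i)) := by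
  classical
  have hpw : ∀ x ∈ H, x ^ (Nat.card H) = 1 := by
    intro x hx
    have h1 : (⟨x, hx⟩ : H) ^ (Nat.card H) = 1 := pow_card_eq_one'
    have h2 : (((⟨x, hx⟩ : H) ^ (Nat.card H) : H) : G) = ((1 : H) : G) :=
      congrArg (fun y : H => (y : G)) h1
    rw [SubgroupClass.coe_pow, OneMemClass.coe_one] at h2
    exact h2
  rcases hAB with hA | hB
  case inr =>
    exact fsx_core hH1 hmin hother a b ha (fun j => hpw _ (hB j))
  case inl =>
  -- partition the b-indices by coset of H
  set r : Fin k → Fin k → Prop := fun j j' => b j * (b j')⁻¹ ∈ H with hr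
  have hrefl : ∀ j, r j j := by
    intro j
    show b j * (b j)⁻¹ ∈ H
    rw [mul_inv_cancel]
    exact H.one_mem
  have hsymm : ∀ {j j'}, r j j' → r j' j := by
    intro j j' h
    have h2 := H.inv_mem h
    rwa [mul_inv_rev, inv_inv] at h2
  have htrans : ∀ {j j' j''}, r j j' → r j' j'' → r j j'' := by
    intro j j' j'' h1 h2
    have h3 := H.mul_mem h1 h2
    rwa [show b j * (b j')⁻¹ * (b j' * (b j'')⁻¹) = b j * (b j'')⁻¹ by group] at h3
  set S : Setoid (Fin k) := ⟨r, ⟨hrefl, hsymm, htrans⟩⟩ with hS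
  have hclass : ∀ q : Quotient S, ∃ σ : Equiv.Perm {j : Fin k // Quotient.mk S j = q},
      Function.Injective
        (fun j : {j : Fin k // Quotient.mk S j = q} => a ((σ j) : Fin k) * b (j : Fin k)) := by
    intro q
    cases isEmpty_or_nonempty {j : Fin k // Quotient.mk S j = q} with
    | inl hE => exact ⟨1, Function.injective_of_subsingleton _⟩
    | inr hNE =>
      obtain ⟨⟨j₀, hj₀⟩⟩ := hNE
      set k' := Fintype.card {j : Fin k // Quotient.mk S j = q} with hk'def
      set eC : Fin k' ≃ {j : Fin k // Quotient.mk S j = q} :=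
        (Fintype.equivFin {j : Fin k // Quotient.mk S j = q}).symm with heC
      set a' : Fin k' → G := fun i => a ((eC i) : Fin k) with ha'def
      set b' : Fin k' → G := fun i => b ((eC i) : Fin k) * (b j₀)⁻¹ with hb'def
      have ha' : Function.Injective a' := by
        intro i i' h
        exact eC.injective (Subtype.ext (ha h))
      have hb' : ∀ i, b' i ^ Nat.card H = 1 := by
        intro i
        apply hpw
        have h1 : Quotient.mk S ((eC i) : Fin k) = Quotient.mk S j₀ := by
          rw [(eC i).2, hj₀]
        exact Quotient.exact h1
      have hk'le : k' ≤ k := by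
        rw [hk'def]
        have h := Fintype.card_subtype_le (fun j : Fin k => Quotient.mk S j = q)
        rwa [Fintype.card_fin] at h
      obtain ⟨τ, hτ⟩ := fsx_core hH1 (lt_of_le_of_lt hk'le hmin)
        (fun qq hq1 hq2 hq3 =>
          lt_of_le_of_lt (Nat.factorial_le hk'le) (hother qq hq1 hq2 hq3))
        a' b' ha' hb'
      refine ⟨eC.permCongr τ⁻¹, ?_⟩
      intro j j' hjj
      have hpc : ∀ x : {j : Fin k // Quotient.mk S j = q},
          a ((eC.permCongr τ⁻¹ x) : Fin k) * b (x : Fin k)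
            = (a' (τ⁻¹ (eC.symm x)) * b' (τ (τ⁻¹ (eC.symm x)))) * b j₀ := by
        intro x
        rw [(show ∀ y, τ (τ⁻¹ y) = y from fun y => Equiv.apply_symm_apply τ y), Equiv.permCongr_apply]
        rw [ha'def, hb'def]
        show a ((eC (τ⁻¹ (eC.symm x))) : Fin k) * b (x : Fin k)
          = a ((eC (τ⁻¹ (eC.symm x))) : Fin k) * (b ((eC (eC.symm x)) : Fin k) * (b j₀)⁻¹) * b j₀
        rw [Equiv.apply_symm_apply]
        group
      have h2 : (fun i => a' i * b' (τ i)) (τ⁻¹ (eC.symm j))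
          = (fun i => a' i * b' (τ i)) (τ⁻¹ (eC.symm j')) := by
        refine mul_right_cancel (b := b j₀) ?_
        rw [show ((fun i => a' i * b' (τ i)) (τ⁻¹ (eC.symm j))) * b j₀
            = (a' (τ⁻¹ (eC.symm j)) * b' (τ (τ⁻¹ (eC.symm j)))) * b j₀ from rfl,
          show ((fun i => a' i * b' (τ i)) (τ⁻¹ (eC.symm j'))) * b j₀
            = (a' (τ⁻¹ (eC.symm j')) * b' (τ (τ⁻¹ (eC.symm j')))) * b j₀ from rfl,
          ← hpc j, ← hpc j']
        exact hjj
      have h3 := hτ h2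
      have h4 : eC.symm j = eC.symm j' := by
        have h5 := congrArg τ h3
        rwa [(show ∀ y, τ (τ⁻¹ y) = y from fun y => Equiv.apply_symm_apply τ y), (show ∀ y, τ (τ⁻¹ y) = y from fun y => Equiv.apply_symm_apply τ y)] at h5
      exact eC.symm.injective h4
  choose σ hσ using hclass
  have key : ∀ (j : Fin k) (q : Quotient S) (h : Quotient.mk S j = q),
      (((σ q) ⟨j, h⟩ : {j' : Fin k // Quotient.mk S j' = q}) : Fin k)
        = ((σ (Quotient.mk S j)) ⟨j, rfl⟩ : Fin k) := by
    intro j q h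
    subst h
    rfl
  set ρ : Fin k → Fin k := fun j => ((σ (Quotient.mk S j)) ⟨j, rfl⟩ : Fin k) with hρdef
  have hρclass : ∀ j, Quotient.mk S (ρ j) = Quotient.mk S j := fun j =>
    ((σ (Quotient.mk S j)) ⟨j, rfl⟩).2
  have hprodinj : ∀ j j', a (ρ j) * b j = a (ρ j') * b j' → j = j' := by
    intro j j' hjj
    have hq : Quotient.mk S j = Quotient.mk S j' := by
      apply Quotient.sound
      show b j * (b j')⁻¹ ∈ H
      have hmem : b j * (b j')⁻¹ = (a (ρ j))⁻¹ * a (ρ j') := by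
        have h5 : a (ρ j) * (b j * (b j')⁻¹) * b j'
            = a (ρ j) * ((a (ρ j))⁻¹ * a (ρ j')) * b j' := by
          rw [show a (ρ j) * (b j * (b j')⁻¹) * b j' = a (ρ j) * b j by group,
            show a (ρ j) * ((a (ρ j))⁻¹ * a (ρ j')) * b j' = a (ρ j') * b j' by group]
          exact hjj
        exact mul_left_cancel (mul_right_cancel h5)
      rw [hmem]
      exact H.mul_mem (H.inv_mem (hA _)) (hA _)
    have e2 : ρ j' = ((σ (Quotient.mk S j)) ⟨j', hq.symm⟩ : Fin k) :=
      (key j' (Quotient.mk S j) hq.symm).symm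
    have h6 : (⟨j, rfl⟩ : {x : Fin k // Quotient.mk S x = Quotient.mk S j})
        = ⟨j', hq.symm⟩ := by
      apply hσ (Quotient.mk S j)
      show a (((σ (Quotient.mk S j)) ⟨j, rfl⟩ : _) : Fin k) * b j
        = a (((σ (Quotient.mk S j)) ⟨j', hq.symm⟩ : _) : Fin k) * b j'
      rw [← e2]
      exact hjj
    exact congrArg Subtype.val h6
  have hρinj : Function.Injective ρ := by
    intro j j' h
    have hq : Quotient.mk S j = Quotient.mk S j' := by
      rw [← hρclass j, ← hρclass j', h]
    have e2 : ρ j' = ((σ (Quotient.mk S j)) ⟨j', hq.symm⟩ : Fin k) :=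
      (key j' (Quotient.mk S j) hq.symm).symm
    have h6 : (⟨j, rfl⟩ : {x : Fin k // Quotient.mk S x = Quotient.mk S j})
        = ⟨j', hq.symm⟩ := by
      apply (σ (Quotient.mk S j)).injective
      apply Subtype.ext
      show (((σ (Quotient.mk S j)) ⟨j, rfl⟩ : _) : Fin k)
        = (((σ (Quotient.mk S j)) ⟨j', hq.symm⟩ : _) : Fin k)
      rw [← e2]
      exact h
    exact congrArg Subtype.val h6
  have hbij : Function.Bijective ρ := Finite.injective_iff_bijective.mp hρinj
  refine ⟨(Equiv.ofBijective ρ hbij).symm, ?_⟩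
  intro i i' h
  have e : ∀ x, ρ ((Equiv.ofBijective ρ hbij).symm x) = x := fun x =>
    (Equiv.ofBijective ρ hbij).apply_symm_apply x
  have h1 : a (ρ ((Equiv.ofBijective ρ hbij).symm i)) * b ((Equiv.ofBijective ρ hbij).symm i)
      = a (ρ ((Equiv.ofBijective ρ hbij).symm i')) * b ((Equiv.ofBijective ρ hbij).symm i') := by
    rw [e, e]
    exact h
  exact (Equiv.ofBijective ρ hbij).symm.injective (hprodinj _ _ h1)
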